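/- For matrices A and B with unit-norm columns, δ₂(A ⊗ B) = max{δ₂(A), δ₂(B)}. -/
import Mathlib
set_option linter.unusedSectionVars false


open Classical Kronecker

/-- Number of nonzero entries of a vector. -/
noncomputable def sparsity {n : Type*} (x : n → ℝ) : ℕ := Set.ncard {i | x i ≠ 0}

/-- The spark of a matrix: the minimal number of nonzero entries of a nonzero kernel
vector; if the kernel is trivial we use the convention `spark A = (number of columns) + 1`. -/
noncomputable def spark {m n : Type*} [Fintype m] [Fintype n] (A : Matrix m n ℝ) : ℕ :=
  if ∃ x : n → ℝ, x ≠ 0 ∧ A.mulVec x = 0 then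
    sInf {k | ∃ x : n → ℝ, x ≠ 0 ∧ A.mulVec x = 0 ∧ sparsity x = k}
  else Fintype.card n + 1

/-- Mutual incoherence: the largest absolute inner product of two distinct columns. -/
noncomputable def mutInc {m n : Type*} [Fintype m] (A : Matrix m n ℝ) : ℝ :=
  sSup {v | ∃ i j, i ≠ j ∧ v = |∑ k, A k i * A k j|}

/-- Off-diagonal mutual incoherence of two matrices. -/
noncomputable def mutIncOD {m n : Type*} [Fintype m] (A B : Matrix m n ℝ) : ℝ :=
  sSup {v | ∃ i j, i ≠ j ∧ v = |∑ k, A k i * B k j|}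

/-- Diagonal mutual incoherence of two matrices. -/
noncomputable def mutIncD {m n : Type*} [Fintype m] (A B : Matrix m n ℝ) : ℝ :=
  sSup {v | ∃ i, v = |∑ k, A k i * B k i|}

/-- Mutual incoherence of a matrix whose columns are renormalized. -/
noncomputable def mutIncN {m n : Type*} [Fintype m] (C : Matrix m n ℝ) : ℝ :=
  sSup {v | ∃ i j, i ≠ j ∧
    v = |∑ k, C k i * C k j| /
        (Real.sqrt (∑ k, (C k i) ^ 2) * Real.sqrt (∑ k, (C k j) ^ 2))}

/-- The `k`-restricted isometry constant of a matrix. -/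
noncomputable def ripConst {m n : Type*} [Fintype m] [Fintype n] (k : ℕ)
    (A : Matrix m n ℝ) : ℝ :=
  sInf {δ | 0 ≤ δ ∧ ∀ x : n → ℝ, sparsity x ≤ k →
    (1 - δ) * ∑ i, (x i) ^ 2 ≤ ∑ i, (A.mulVec x i) ^ 2 ∧
    ∑ i, (A.mulVec x i) ^ 2 ≤ (1 + δ) * ∑ i, (x i) ^ 2}

/-- Iterated Kronecker product of a family of matrices (up to the standard
reindexing of the row/column index sets). -/
noncomputable def kronFamily {N : ℕ} {m n : Fin N → ℕ}
    (A : ∀ i, Matrix (Fin (m i)) (Fin (n i)) ℝ) :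
    Matrix (∀ i, Fin (m i)) (∀ i, Fin (n i)) ℝ :=
  fun r c => ∏ i, A i (r i) (c i)

section Aux
variable {m n : Type*} [Fintype m] [Fintype n] [DecidableEq n]

lemma mutInc_set_finite (C : Matrix m n ℝ) :
    {v | ∃ i j, i ≠ j ∧ v = |∑ k, C k i * C k j|}.Finite := by
  apply Set.Finite.subset (Set.finite_range (fun p : n × n => |∑ k, C k p.1 * C k p.2|))
  rintro v ⟨i, j, _, rfl⟩
  exact ⟨(i, j), rfl⟩

lemma abs_inner_le_one (C : Matrix m n ℝ) (hC : ∀ j, ∑ k, (C k j) ^ 2 = 1) (i j : n) :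
    |∑ k, C k i * C k j| ≤ 1 := by
  have h := Finset.sum_mul_sq_le_sq_mul_sq Finset.univ (fun k => C k i) (fun k => C k j)
  rw [hC i, hC j] at h
  exact (sq_le_one_iff_abs_le_one _).mp (by linarith)

lemma inner_self_eq_one (C : Matrix m n ℝ) (hC : ∀ j, ∑ k, (C k j) ^ 2 = 1) (i : n) :
    ∑ k, C k i * C k i = 1 := by
  have := hC i; simpa [sq] using this

lemma two_sparse_support [Nontrivial n] {x : n → ℝ} (hx : sparsity x ≤ 2) :
    ∃ i j : n, i ≠ j ∧ ∀ k, k ≠ i → k ≠ j → x k = 0 := by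
  classical
  have hcard : (Set.toFinset {i | x i ≠ 0}).card ≤ 2 := by
    have h := Set.ncard_eq_toFinset_card' {i | x i ≠ 0}
    unfold sparsity at hx
    omega
  have h2 : 2 ≤ Fintype.card n := Fintype.one_lt_card
  obtain ⟨t, hst, ht⟩ := Finset.exists_superset_card_eq hcard h2
  obtain ⟨i, j, hij, rfl⟩ := Finset.card_eq_two.mp ht
  refine ⟨i, j, hij, fun k h1 h2 => ?_⟩
  by_contra hk
  have : k ∈ ({i, j} : Finset n) := hst (by simpa using hk)
  simp only [Finset.mem_insert, Finset.mem_singleton] at this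
  tauto

lemma sum_sq_two {x : n → ℝ} {i j : n} (hij : i ≠ j)
    (hx : ∀ k, k ≠ i → k ≠ j → x k = 0) :
    ∑ k, (x k) ^ 2 = (x i) ^ 2 + (x j) ^ 2 := by
  rw [← Finset.sum_subset (Finset.subset_univ ({i, j} : Finset n))]
  · rw [Finset.sum_insert (by simp [hij]), Finset.sum_singleton]
  · intro k _ hk
    simp only [Finset.mem_insert, Finset.mem_singleton, not_or] at hk
    rw [hx k hk.1 hk.2]
    simp

lemma mulVec_two (C : Matrix m n ℝ) {x : n → ℝ} {i j : n} (hij : i ≠ j)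
    (hx : ∀ k, k ≠ i → k ≠ j → x k = 0) (k : m) :
    C.mulVec x k = C k i * x i + C k j * x j := by
  unfold Matrix.mulVec dotProduct
  rw [← Finset.sum_subset (Finset.subset_univ ({i, j} : Finset n))]
  · rw [Finset.sum_insert (by simp [hij]), Finset.sum_singleton]
  · intro k' _ hk'
    simp only [Finset.mem_insert, Finset.mem_singleton, not_or] at hk'
    rw [hx k' hk'.1 hk'.2, mul_zero]

lemma sum_sq_mulVec (C : Matrix m n ℝ) (hC : ∀ j, ∑ k, (C k j) ^ 2 = 1)
    {x : n → ℝ} {i j : n} (hij : i ≠ j)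
    (hx : ∀ k, k ≠ i → k ≠ j → x k = 0) :
    ∑ k, (C.mulVec x k) ^ 2
      = (x i) ^ 2 + (x j) ^ 2 + 2 * x i * x j * ∑ k, C k i * C k j := by
  have he : ∀ k : m, (C.mulVec x k) ^ 2
      = (C k i) ^ 2 * (x i) ^ 2 + (C k j) ^ 2 * (x j) ^ 2
        + 2 * x i * x j * (C k i * C k j) := by
    intro k; rw [mulVec_two C hij hx k]; ring
  simp_rw [he]
  rw [Finset.sum_add_distrib, Finset.sum_add_distrib, ← Finset.sum_mul, ← Finset.sum_mul,
    ← Finset.mul_sum, hC i, hC j, one_mul, one_mul]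

lemma rip_eq_mutInc [Nontrivial n] (C : Matrix m n ℝ)
    (hC : ∀ j, ∑ k, (C k j) ^ 2 = 1) : ripConst 2 C = mutInc C := by
  classical
  set S : Set ℝ := {v | ∃ i j, i ≠ j ∧ v = |∑ k, C k i * C k j|} with hS
  have hfin : S.Finite := mutInc_set_finite C
  obtain ⟨i0, j0, h0⟩ := exists_pair_ne n
  have hne : S.Nonempty := ⟨_, i0, j0, h0, rfl⟩
  have hbdd : BddAbove S := hfin.bddAbove
  have hMdef : mutInc C = sSup S := rfl
  have hMle : ∀ i j : n, i ≠ j → |∑ k, C k i * C k j| ≤ mutInc C := by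
    intro i j h; exact le_csSup hbdd ⟨i, j, h, rfl⟩
  have hM0 : 0 ≤ mutInc C := le_trans (abs_nonneg _) (hMle i0 j0 h0)
  have hmem : mutInc C ∈ {δ | 0 ≤ δ ∧ ∀ x : n → ℝ, sparsity x ≤ 2 →
      (1 - δ) * ∑ i, (x i) ^ 2 ≤ ∑ i, (C.mulVec x i) ^ 2 ∧
      ∑ i, (C.mulVec x i) ^ 2 ≤ (1 + δ) * ∑ i, (x i) ^ 2} := by
    refine ⟨hM0, fun x hx => ?_⟩
    obtain ⟨i, j, hij, hsupp⟩ := two_sparse_support hx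
    rw [sum_sq_mulVec C hC hij hsupp, sum_sq_two hij hsupp]
    have hg := hMle i j hij
    rw [abs_le] at hg
    constructor
    · nlinarith [sq_nonneg (x i - x j), sq_nonneg (x i + x j), hg.1, hg.2]
    · nlinarith [sq_nonneg (x i - x j), sq_nonneg (x i + x j), hg.1, hg.2]
  have hlow : ∀ δ ∈ {δ : ℝ | 0 ≤ δ ∧ ∀ x : n → ℝ, sparsity x ≤ 2 →
      (1 - δ) * ∑ i, (x i) ^ 2 ≤ ∑ i, (C.mulVec x i) ^ 2 ∧
      ∑ i, (C.mulVec x i) ^ 2 ≤ (1 + δ) * ∑ i, (x i) ^ 2}, mutInc C ≤ δ := by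
    intro δ hδ
    rw [hMdef]
    apply csSup_le hne
    rintro v ⟨i, j, hij, rfl⟩
    set x : n → ℝ := fun k => if k = i then 1 else if k = j then 1 else 0 with hxdef
    have hsupp : ∀ k, k ≠ i → k ≠ j → x k = 0 := by
      intro k h1 h2; simp [hxdef, h1, h2]
    have hxi : x i = 1 := by simp [hxdef]
    have hxj : x j = 1 := by simp [hxdef, hij.symm]
    have hsp : sparsity x ≤ 2 := by
      unfold sparsity
      have hsub : {k | x k ≠ 0} ⊆ {i, j} := by
        intro k hk
        by_contra hc
        simp only [Set.mem_insert_iff, Set.mem_singleton_iff, not_or] at hc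
        exact hk (hsupp k hc.1 hc.2)
      calc Set.ncard {k | x k ≠ 0} ≤ Set.ncard ({i, j} : Set n) :=
            Set.ncard_le_ncard hsub (Set.toFinite _)
        _ = 2 := Set.ncard_pair hij
    obtain ⟨h1, h2⟩ := hδ.2 x hsp
    rw [sum_sq_mulVec C hC hij hsupp, sum_sq_two hij hsupp, hxi, hxj] at h1 h2
    rw [abs_le]
    constructor <;> nlinarith
  exact le_antisymm (csInf_le ⟨0, fun δ hδ => hδ.1⟩ hmem) (le_csInf ⟨_, hmem⟩ hlow)

end Aux

section Kron
variable {m₁ n₁ m₂ n₂ : ℕ}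

lemma kron_inner (A : Matrix (Fin m₁) (Fin n₁) ℝ) (B : Matrix (Fin m₂) (Fin n₂) ℝ)
    (p q : Fin n₁ × Fin n₂) :
    ∑ k : Fin m₁ × Fin m₂, (A ⊗ₖ B) k p * (A ⊗ₖ B) k q
      = (∑ k, A k p.1 * A k q.1) * (∑ l, B l p.2 * B l q.2) := by
  rw [Finset.sum_mul_sum, Fintype.sum_prod_type]
  refine Finset.sum_congr rfl fun k1 _ => Finset.sum_congr rfl fun k2 _ => ?_
  simp only [Matrix.kroneckerMap_apply]
  ring

lemma kron_unit (A : Matrix (Fin m₁) (Fin n₁) ℝ) (B : Matrix (Fin m₂) (Fin n₂) ℝ)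
    (hA : ∀ j, ∑ k, (A k j) ^ 2 = 1) (hB : ∀ j, ∑ k, (B k j) ^ 2 = 1) :
    ∀ j, ∑ k, ((A ⊗ₖ B) k j) ^ 2 = 1 := by
  intro j
  have h := kron_inner A B j j
  rw [inner_self_eq_one A hA, inner_self_eq_one B hB, mul_one] at h
  rw [← h]
  exact Finset.sum_congr rfl fun k _ => sq ((A ⊗ₖ B) k j)

lemma mutInc_kron (hn₁ : 2 ≤ n₁) (hn₂ : 2 ≤ n₂)
    (A : Matrix (Fin m₁) (Fin n₁) ℝ) (B : Matrix (Fin m₂) (Fin n₂) ℝ)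
    (hA : ∀ j, ∑ k, (A k j) ^ 2 = 1) (hB : ∀ j, ∑ k, (B k j) ^ 2 = 1) :
    mutInc (A ⊗ₖ B) = max (mutInc A) (mutInc B) := by
  classical
  haveI : Nontrivial (Fin n₁) := Fin.nontrivial_iff_two_le.mpr hn₁
  haveI : Nontrivial (Fin n₂) := Fin.nontrivial_iff_two_le.mpr hn₂
  obtain ⟨i0, i1, hi⟩ := exists_pair_ne (Fin n₁)
  obtain ⟨j0, j1, hj⟩ := exists_pair_ne (Fin n₂)
  have hbddA := (mutInc_set_finite A).bddAbove
  have hbddB := (mutInc_set_finite B).bddAbove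
  have hbddAB := (mutInc_set_finite (A ⊗ₖ B)).bddAbove
  have hneA : {v | ∃ i j, i ≠ j ∧ v = |∑ k, A k i * A k j|}.Nonempty := ⟨_, i0, i1, hi, rfl⟩
  have hneB : {v | ∃ i j, i ≠ j ∧ v = |∑ k, B k i * B k j|}.Nonempty := ⟨_, j0, j1, hj, rfl⟩
  have hneAB : {v | ∃ p q, p ≠ q ∧ v = |∑ k, (A ⊗ₖ B) k p * (A ⊗ₖ B) k q|}.Nonempty :=
    ⟨_, (i0, j0), (i1, j0), by simp [hi], rfl⟩
  have hMA : ∀ i j : Fin n₁, i ≠ j → |∑ k, A k i * A k j| ≤ mutInc A :=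
    fun i j h => le_csSup hbddA ⟨i, j, h, rfl⟩
  have hMB : ∀ i j : Fin n₂, i ≠ j → |∑ k, B k i * B k j| ≤ mutInc B :=
    fun i j h => le_csSup hbddB ⟨i, j, h, rfl⟩
  apply le_antisymm
  · apply csSup_le hneAB
    rintro v ⟨p, q, hpq, rfl⟩
    rw [kron_inner, abs_mul]
    by_cases h1 : p.1 = q.1
    · have h2 : p.2 ≠ q.2 := fun h => hpq (Prod.ext h1 h)
      rw [h1, inner_self_eq_one A hA, abs_one, one_mul]
      exact le_max_of_le_right (hMB _ _ h2)
    · apply le_max_of_le_left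
      calc |∑ k, A k p.1 * A k q.1| * |∑ l, B l p.2 * B l q.2|
          ≤ |∑ k, A k p.1 * A k q.1| * 1 :=
            mul_le_mul_of_nonneg_left (abs_inner_le_one B hB _ _) (abs_nonneg _)
        _ = |∑ k, A k p.1 * A k q.1| := mul_one _
        _ ≤ mutInc A := hMA _ _ h1
  · apply max_le
    · apply csSup_le hneA
      rintro v ⟨i, j, hij, rfl⟩
      have hmem : |∑ k, A k i * A k j|
          ∈ {v | ∃ p q, p ≠ q ∧ v = |∑ k, (A ⊗ₖ B) k p * (A ⊗ₖ B) k q|} := by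
        refine ⟨(i, j0), (j, j0), by simp [hij], ?_⟩
        rw [kron_inner, inner_self_eq_one B hB, mul_one]
      exact le_csSup hbddAB hmem
    · apply csSup_le hneB
      rintro v ⟨i, j, hij, rfl⟩
      have hmem : |∑ k, B k i * B k j|
          ∈ {v | ∃ p q, p ≠ q ∧ v = |∑ k, (A ⊗ₖ B) k p * (A ⊗ₖ B) k q|} := by
        refine ⟨(i0, i), (i0, j), by simp [hij], ?_⟩
        rw [kron_inner, inner_self_eq_one A hA, one_mul]
      exact le_csSup hbddAB hmem

end Kron

theorem stmt16 {m₁ n₁ m₂ n₂ : ℕ} (hn₁ : 2 ≤ n₁) (hn₂ : 2 ≤ n₂)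
    (A : Matrix (Fin m₁) (Fin n₁) ℝ) (B : Matrix (Fin m₂) (Fin n₂) ℝ)
    (hA : ∀ j, ∑ k, (A k j) ^ 2 = 1) (hB : ∀ j, ∑ k, (B k j) ^ 2 = 1) :
    ripConst 2 (A ⊗ₖ B) = max (ripConst 2 A) (ripConst 2 B) := by
  haveI : Nontrivial (Fin n₁) := Fin.nontrivial_iff_two_le.mpr hn₁
  haveI : Nontrivial (Fin n₂) := Fin.nontrivial_iff_two_le.mpr hn₂
  rw [rip_eq_mutInc A hA, rip_eq_mutInc B hB,
    rip_eq_mutInc (A ⊗ₖ B) (kron_unit A B hA hB), mutInc_kron hn₁ hn₂ A B hA hB]
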